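/- Let G be a finite simple graph with an nd-decomposition P_1, ..., P_k, let T be the associated type graph on {1, ..., k}, and let 𝓘 denote the family of maximal independent sets of T. If G admits a proper coloring with c colors, then there exists x : 𝓘 → ℕ with Σ_{I ∈ 𝓘} x(I) ≤ c such that for each i with P_i inducing a clique, Σ_{I ∈ 𝓘, i ∈ I} x(I) ≥ |P_i|, and for each i with P_i inducing a (nonempty) independent set, Σ_{I ∈ 𝓘, i ∈ I} x(I) ≥ 1. -/

import Mathlib

/-- A set of vertices is independent if no two of its vertices are adjacent. -/
def SimpleGraph.IsIndep {V : Type*} (G : SimpleGraph V) (s : Set V) : Prop :=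
  s.Pairwise fun u v => ¬ G.Adj u v

/-- The type graph of a partition `P` of the vertices of `G`: distinct indices `i, j` are
adjacent iff all edges between `P i` and `P j` are present in `G`. -/
def typeGraph {V : Type*} (G : SimpleGraph V) {k : ℕ} (P : Fin k → Finset V) :
    SimpleGraph (Fin k) where
  Adj i j := i ≠ j ∧ ∀ u ∈ P i, ∀ v ∈ P j, G.Adj u v
  symm := by
    constructor
    intro i j h
    exact ⟨h.1.symm, fun u hu v hv => (h.2 v hv u hu).symm⟩
  loopless := by
    constructor
    intro i h
    exact h.1 rfl

open Classical in
/-- The family of maximal independent sets of a graph on `Fin k`. -/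
noncomputable def maxIndepSets {k : ℕ} (T : SimpleGraph (Fin k)) :
    Finset (Finset (Fin k)) :=
  Finset.univ.filter fun I =>
    T.IsIndep ↑I ∧ ∀ J : Finset (Fin k), T.IsIndep ↑J → I ⊆ J → I = J


open Classical in
lemma exists_max_indep {k : ℕ} (T : SimpleGraph (Fin k)) (I : Finset (Fin k))
    (hI : T.IsIndep ↑I) : ∃ M ∈ maxIndepSets T, I ⊆ M := by
  classical
  obtain ⟨M, hM, hmax⟩ := Finset.exists_max_image
    ((Finset.univ : Finset (Finset (Fin k))).filter fun J : Finset (Fin k) => T.IsIndep (↑J : Set (Fin k)) ∧ I ⊆ J)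
    Finset.card ⟨I, by simp [hI]⟩
  simp only [Finset.mem_filter, Finset.mem_univ, true_and] at hM hmax
  refine ⟨M, ?_, hM.2⟩
  simp only [maxIndepSets, Finset.mem_filter, Finset.mem_univ, true_and]
  refine ⟨hM.1, fun J hJ hsub => Finset.eq_of_subset_of_card_le hsub ?_⟩
  exact hmax J ⟨hJ, hM.2.trans hsub⟩

/-- Let `G` have an nd-decomposition `P_1, …, P_k` with type graph `T` and let `𝓘` be the
family of maximal independent sets of `T`.  If `G` admits a proper coloring with `c`
colors, then there is `x : 𝓘 → ℕ` with `Σ_I x I ≤ c` satisfying the covering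
constraints (`Σ_{I ∋ i} x I ≥ |P i|` for clique parts and `Σ_{I ∋ i} x I ≥ 1` for
nonempty independent-set parts). -/
theorem covering_solution_of_colorable {V : Type*} [Fintype V] (G : SimpleGraph V)
    (k : ℕ) (P : Fin k → Finset V)
    (hpart : ∀ v : V, ∃! i : Fin k, v ∈ P i)
    (hcliqueIndep : ∀ i : Fin k, G.IsClique ↑(P i) ∨ G.IsIndep ↑(P i))
    (hhom : ∀ i j : Fin k, i ≠ j →
      (∀ u ∈ P i, ∀ v ∈ P j, G.Adj u v) ∨ (∀ u ∈ P i, ∀ v ∈ P j, ¬ G.Adj u v))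
    (c : ℕ) (hc : G.Colorable c) :
    ∃ x : Finset (Fin k) → ℕ,
      (∑ I ∈ maxIndepSets (typeGraph G P), x I) ≤ c ∧
      (∀ i : Fin k, G.IsClique ↑(P i) →
        (P i).card ≤ ∑ I ∈ (maxIndepSets (typeGraph G P)).filter (fun I => i ∈ I), x I) ∧
      (∀ i : Fin k, G.IsIndep ↑(P i) → (P i).Nonempty →
        1 ≤ ∑ I ∈ (maxIndepSets (typeGraph G P)).filter (fun I => i ∈ I), x I) := by
  classical
  obtain ⟨C⟩ := hc
  set T := typeGraph G P with hT
  set J : Fin c → Finset (Fin k) :=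
    fun t => Finset.univ.filter fun i => ∃ v ∈ P i, C v = t with hJ
  have hJindep : ∀ t : Fin c, T.IsIndep ↑(J t) := by
    intro t i hi j hj hij hadj
    simp only [hJ, Finset.coe_filter, Set.mem_setOf_eq, Finset.mem_univ, true_and] at hi hj
    obtain ⟨u, hu, hut⟩ := hi
    obtain ⟨v, hv, hvt⟩ := hj
    exact C.valid (hadj.2 u hu v hv) (hut.trans hvt.symm)
  choose M hMmem hJM using fun t => exists_max_indep T (J t) (hJindep t)
  refine ⟨fun I => (Finset.univ.filter fun t : Fin c => M t = I).card, ?_, ?_, ?_⟩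
  · have := Finset.card_eq_sum_card_fiberwise
      (s := (Finset.univ : Finset (Fin c))) (t := maxIndepSets T) (f := M)
      (fun t _ => hMmem t)
    simp only [Finset.card_univ, Fintype.card_fin] at this
    exact le_of_eq this.symm
  · intro i hclique
    have key : ∑ I ∈ (maxIndepSets T).filter (fun I => i ∈ I),
        (Finset.univ.filter fun t : Fin c => M t = I).card
        = (Finset.univ.filter fun t : Fin c => i ∈ M t).card := by
      rw [Finset.card_eq_sum_card_fiberwise
        (s := Finset.univ.filter fun t : Fin c => i ∈ M t)
        (t := (maxIndepSets T).filter (fun I => i ∈ I)) (f := M)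
        (fun t ht => by
          simp only [Finset.mem_coe, Finset.mem_filter, Finset.mem_univ, true_and] at ht ⊢
          exact ⟨hMmem t, ht⟩)]
      refine Finset.sum_congr rfl fun I hI => ?_
      simp only [Finset.mem_filter, Finset.mem_univ, true_and] at hI
      congr 1
      ext t
      simp only [Finset.mem_filter, Finset.mem_univ, true_and]
      constructor
      · intro h; exact ⟨h ▸ hI.2, h⟩
      · exact fun h => h.2
    rw [key]
    apply Finset.card_le_card_of_injOn C
    · intro v hv
      simp only [Finset.mem_coe, Finset.mem_filter, Finset.mem_univ, true_and]
      apply hJM (C v)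
      simp only [hJ, Finset.mem_filter, Finset.mem_univ, true_and]
      exact ⟨v, hv, rfl⟩
    · intro u hu v hv huv
      by_contra hne
      exact C.valid (hclique hu hv hne) huv
  · intro i _ ⟨v, hv⟩
    have hi : i ∈ M (C v) := by
      apply hJM (C v)
      simp only [hJ, Finset.mem_filter, Finset.mem_univ, true_and]
      exact ⟨v, hv, rfl⟩
    calc 1 ≤ (Finset.univ.filter fun t : Fin c => M t = M (C v)).card := by
            refine Finset.card_pos.mpr ⟨C v, ?_⟩
            simp
      _ ≤ _ := Finset.single_le_sum (f := fun I => (Finset.univ.filter fun t : Fin c => M t = I).card)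
            (fun _ _ => Nat.zero_le _)
            (by simp only [Finset.mem_filter]; exact ⟨hMmem _, hi⟩)
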